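/- (Hamiltonian of the r-spin Givental field; content of the quantization propositions.) Fix integers r ≥ 2 and d ≥ 1, let V = H ⊗ ℚ^{r−1} with basis (h_μ ⊗ e_m) and the tensor-product bilinear form, and let 𝒱 = V((z⁻¹)) with Givental's form ω and Darboux coordinates q_a^{μ⊗m}, p_{a,μ⊗m}. Let T be the operator of multiplication by (z^d/(d+1)!) · Id_H ⊗ diag[ B_{d+1}(1/r), …, B_{d+1}((r−1)/r) ]. Then for every f ∈ 𝒱: (1/2) ω(Tf, f) = − Σ_{a≥0, μ, 1≤m≤r−1} (B_{d+1}(m/r)/(d+1)!) q_a^{μ⊗m}(f) p_{a+d, μ⊗m}(f) + (1/2) Σ_{a+a'=d−1, a,a'≥0, μ, μ', m, m'} (−1)^{a'} (B_{d+1}(m/r)/(d+1)!) g^{μ⊗m, μ'⊗m'} p_{a, μ⊗m}(f) p_{a', μ'⊗m'}(f), where (g^{μ⊗m, μ'⊗m'}) is the inverse of the Gram matrix of the tensor-product form. -/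

import Mathlib

noncomputable section

open scoped TensorProduct

/-- `f : ℤ → V` has coefficients vanishing for all sufficiently large `k`
(finitely many positive powers of `z`). -/
def IsGivental {V : Type*} [AddCommGroup V] [Module ℚ V] (f : ℤ → V) : Prop :=
  ∃ N : ℤ, ∀ k : ℤ, N < k → f k = 0

/-- Givental's symplectic form `ω(f₁, f₂) = Σ_{k∈ℤ} (−1)^k g(f₁_k, f₂_{−1−k})`. -/
def giventalForm {V : Type*} [AddCommGroup V] [Module ℚ V]
    (g : V →ₗ[ℚ] V →ₗ[ℚ] ℚ) (f₁ f₂ : ℤ → V) : ℚ :=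
  ∑ᶠ k : ℤ, (-1 : ℚ) ^ k * g (f₁ k) (f₂ (-1 - k))

/-- The Darboux coordinate `q_a^μ(f)`: the `h_μ`-coordinate of the coefficient `f_a`. -/
def qCoord {V : Type*} [AddCommGroup V] [Module ℚ V] {ι : Type*}
    (b : Module.Basis ι ℚ V) (f : ℤ → V) (a : ℕ) (μ : ι) : ℚ :=
  b.repr (f a) μ

/-- The Darboux coordinate `p_{a,μ}(f) = (−1)^{a+1} g(f_{−1−a}, h_μ)`. -/
def pCoord {V : Type*} [AddCommGroup V] [Module ℚ V] {ι : Type*}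
    (g : V →ₗ[ℚ] V →ₗ[ℚ] ℚ) (b : Module.Basis ι ℚ V) (f : ℤ → V) (a : ℕ) (μ : ι) : ℚ :=
  (-1 : ℚ) ^ (a + 1) * g (f (-1 - a)) (b μ)

/-- The bilinear form on `ℚ^{r−1}` given by `g(e_a, e_b) = δ_{a+b,r}`
(the index `i : Fin (r-1)` corresponds to `m = i + 1`). -/
def spinPairing (r : ℕ) : (Fin (r - 1) → ℚ) →ₗ[ℚ] (Fin (r - 1) → ℚ) →ₗ[ℚ] ℚ :=
  Matrix.toLinearMap₂' ℚ
    (Matrix.of fun i j : Fin (r - 1) =>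
      if (i : ℕ) + 1 + ((j : ℕ) + 1) = r then (1 : ℚ) else 0)

/-- The diagonal operator `diag[B_{d+1}(1/r), …, B_{d+1}((r−1)/r)]` on `ℚ^{r−1}`. -/
def bernoulliDiag (r d : ℕ) : (Fin (r - 1) → ℚ) →ₗ[ℚ] (Fin (r - 1) → ℚ) :=
  LinearMap.pi fun i =>
    ((Polynomial.bernoulli (d + 1)).eval ((((i : ℕ) : ℚ) + 1) / r)) • LinearMap.proj i

/-- The operator of multiplication by
`(z^d/(d+1)!) · Id_H ⊗ diag[B_{d+1}(1/r), …, B_{d+1}((r−1)/r)]` on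
`𝒱 = (H ⊗ ℚ^{r−1})((z⁻¹))`. -/
def rspinField {H : Type*} [AddCommGroup H] [Module ℚ H] (r d : ℕ)
    (f : ℤ → H ⊗[ℚ] (Fin (r - 1) → ℚ)) : ℤ → H ⊗[ℚ] (Fin (r - 1) → ℚ) :=
  fun k => ((Nat.factorial (d + 1) : ℚ))⁻¹ •
    (TensorProduct.map LinearMap.id (bernoulliDiag r d)) (f (k - d))


open Polynomial in
lemma aux_bernoulli_comp_one_sub (n : ℕ) :
    (Polynomial.bernoulli n).comp (1 - X) = (-1 : ℚ) ^ n • Polynomial.bernoulli n := by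
  induction n with
  | zero => simp [Polynomial.bernoulli_zero]
  | succ m ih =>
    have hder : derivative ((Polynomial.bernoulli (m+1)).comp (1 - X)
        - (-1:ℚ)^(m+1) • Polynomial.bernoulli (m+1)) = 0 := by
      rw [derivative_sub, derivative_comp, Polynomial.derivative_bernoulli_add_one,
        derivative_smul, Polynomial.derivative_bernoulli_add_one]
      simp only [derivative_sub, derivative_one, derivative_X, zero_sub, mul_comp, add_comp,
        natCast_comp, one_comp, ih]
      simp only [Polynomial.smul_eq_C_mul, map_pow, map_neg, map_one, map_mul, pow_succ]
      ring
    have h0 := Polynomial.eq_C_of_derivative_eq_zero hder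
    have heval : ((Polynomial.bernoulli (m+1)).comp (1 - X)
        - (-1:ℚ)^(m+1) • Polynomial.bernoulli (m+1)).eval 0 = 0 := by
      simp only [eval_sub, eval_comp, eval_one, eval_X, sub_zero, eval_smul, smul_eq_mul]
      rw [Polynomial.bernoulli_eval_one, Polynomial.bernoulli_eval_zero]
      rcases eq_or_ne (m+1) 1 with h1 | h1
      · have : m = 0 := by omega
        subst this
        norm_num [bernoulli'_one, _root_.bernoulli_one]
      · rw [← bernoulli_eq_bernoulli'_of_ne_one h1]
        rcases Nat.even_or_odd (m+1) with he | ho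
        · rw [he.neg_one_pow]; ring
        · rw [ho.neg_one_pow, bernoulli_eq_bernoulli'_of_ne_one h1,
            bernoulli'_eq_zero_of_odd ho (by omega)]; ring
    have hz : (Polynomial.bernoulli (m+1)).comp (1 - X)
        - (-1:ℚ)^(m+1) • Polynomial.bernoulli (m+1) = 0 := by
      rw [h0, Polynomial.coeff_zero_eq_eval_zero, heval, map_zero]
    have := sub_eq_zero.mp hz
    exact this

lemma aux_bernoulli_eval_one_sub (n : ℕ) (x : ℚ) :
    (Polynomial.bernoulli n).eval (1 - x) = (-1 : ℚ) ^ n * (Polynomial.bernoulli n).eval x := by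
  have := congrArg (Polynomial.eval x) (aux_bernoulli_comp_one_sub n)
  simpa [Polynomial.eval_comp] using this


lemma aux_neg_one_zpow (m n : ℤ) (h : (2:ℤ) ∣ (m - n)) : (-1:ℚ)^m = (-1:ℚ)^n := by
  obtain ⟨c, hc⟩ := h
  have hm : m = n + 2*c := by omega
  subst hm
  rw [zpow_add₀ (by norm_num : (-1:ℚ) ≠ 0)]
  have h2 : (-1:ℚ) ^ (2*c) = 1 := Even.neg_one_zpow ⟨c, by ring⟩
  rw [h2, mul_one]

lemma aux_core {ι' : Type*} [Fintype ι'] [DecidableEq ι'] (A : ℤ → ι' → ℚ) (G Gi : Matrix ι' ι' ℚ)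
    (lam : ι' → ℚ) (d Nn : ℕ) (hd : 1 ≤ d)
    (hA : ∀ k : ℤ, (Nn : ℤ) < k → A k = 0)
    (hGs : ∀ x y, G x y = G y x)
    (hlam : ∀ x y, lam x * G x y = (-1:ℚ)^(d+1) * (lam y * G x y))
    (hGi : ∀ x z, (∑ y, Gi x y * G z y) = if x = z then (1:ℚ) else 0) :
    (1/2 : ℚ) * (∑ᶠ k : ℤ, (-1:ℚ)^k * ∑ x, ∑ y, lam x * A (k - d) x * A (-1 - k) y * G x y)
    = -(∑ᶠ a : ℕ, ∑ x, lam x * A (a:ℤ) x *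
          ((-1:ℚ)^(a + d + 1) * ∑ z, A (-1 - ((a + d : ℕ) : ℤ)) z * G z x))
      + (1/2 : ℚ) * ∑ a ∈ Finset.range d, ∑ x, ∑ y,
          (-1:ℚ)^(d - 1 - a) * lam x * Gi x y *
            ((-1:ℚ)^(a + 1) * ∑ z, A (-1 - (a : ℤ)) z * G z x) *
            ((-1:ℚ)^(d - 1 - a + 1) * ∑ z, A (-1 - ((d - 1 - a : ℕ) : ℤ)) z * G z y) := by
  classical
  set T : ℤ → ℚ := fun k => ∑ x, ∑ y, lam x * A (k - d) x * A (-1 - k) y * G x y with hT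
  set F : ℤ → ℚ := fun k => (-1:ℚ)^k * T k with hF
  -- helper : flip G in inner sums
  have hPG : ∀ (t : ℤ) (x : ι'), (∑ y, A t y * G x y) = ∑ y, A t y * G y x :=
    fun t x => Finset.sum_congr rfl fun y _ => by rw [hGs]
  -- swap lemma
  have hswap : ∀ s t : ℤ, (∑ x, ∑ y, lam x * A s x * A t y * G x y)
      = (-1:ℚ)^(d+1) * ∑ x, ∑ y, lam x * A t x * A s y * G x y := by
    intro s t
    rw [Finset.mul_sum, Finset.sum_comm]
    refine Finset.sum_congr rfl fun x _ => ?_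
    rw [Finset.mul_sum]
    refine Finset.sum_congr rfl fun y _ => ?_
    have h := hlam y x
    rw [hGs y x] at h
    rw [hGs y x]
    linear_combination (A s y * A t x) * h
  -- vanishing of T
  have hTzero : ∀ k : ℤ, ((Nn:ℤ) + d < k ∨ k < -1 - (Nn:ℤ)) → T k = 0 := by
    intro k hk
    rcases hk with hk | hk
    · have h0 : A (k - d) = 0 := hA _ (by omega)
      simp [hT, h0]
    · have h0 : A (-1 - k) = 0 := hA _ (by omega)
      simp [hT, h0]
  -- finsum to finset sum
  have hsupp : Function.support F ⊆ ((Finset.Ioc (-(Nn:ℤ) - 2) ((Nn:ℤ) + d)) : Finset ℤ) := by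
    intro k hk
    simp only [Function.mem_support, hF] at hk
    simp only [Finset.coe_Ioc, Set.mem_Ioc]
    rcases lt_or_ge ((Nn:ℤ)+d) k with h | h
    · exact absurd (by rw [hTzero k (Or.inl h)]; ring) hk
    rcases lt_or_ge k (-1 - (Nn:ℤ)) with h2 | h2
    · exact absurd (by rw [hTzero k (Or.inr h2)]; ring) hk
    · exact ⟨by omega, h⟩
  have hfin : (∑ᶠ k : ℤ, F k) = ∑ k ∈ Finset.Ioc (-(Nn:ℤ) - 2) ((Nn:ℤ) + d), F k :=
    finsum_eq_sum_of_support_subset F hsupp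
  -- split the interval
  have h1 : (-(Nn:ℤ) - 2) ≤ -1 := by omega
  have h2 : (-1:ℤ) ≤ (d:ℤ) - 1 := by omega
  have h3 : ((d:ℤ) - 1) ≤ (Nn:ℤ) + d := by omega
  have hsplit : ∑ k ∈ Finset.Ioc (-(Nn:ℤ) - 2) ((Nn:ℤ) + d), F k
      = (∑ k ∈ Finset.Ioc (-(Nn:ℤ) - 2) (-1:ℤ), F k)
        + ((∑ k ∈ Finset.Ioc (-1:ℤ) ((d:ℤ) - 1), F k)
          + (∑ k ∈ Finset.Ioc ((d:ℤ) - 1) ((Nn:ℤ) + d), F k)) := by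
    rw [← Finset.Ioc_union_Ioc_eq_Ioc h1 (le_trans h2 h3),
      Finset.sum_union (Finset.disjoint_left.mpr fun k hk hk' => by simp only [Finset.mem_Ioc] at hk hk'; omega),
      ← Finset.Ioc_union_Ioc_eq_Ioc h2 h3,
      Finset.sum_union (Finset.disjoint_left.mpr fun k hk hk' => by simp only [Finset.mem_Ioc] at hk hk'; omega)]
  -- reindexing
  have e1 : (∑ k ∈ Finset.Ioc (-(Nn:ℤ) - 2) (-1:ℤ), F k)
      = ∑ a ∈ Finset.range (Nn+1), F (-1 - (a:ℤ)) := by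
    refine Finset.sum_bij' (fun k _ => (-1 - k).toNat) (fun a _ => -1 - (a:ℤ)) ?_ ?_ ?_ ?_ ?_
    · intro k hk; simp only [Finset.mem_Ioc] at hk; simp only [Finset.mem_range]; omega
    · intro a ha; simp only [Finset.mem_range] at ha; simp only [Finset.mem_Ioc]; omega
    · intro k hk; simp only [Finset.mem_Ioc] at hk; omega
    · intro a ha; simp only [Finset.mem_range] at ha; omega
    · intro k hk; simp only [Finset.mem_Ioc] at hk; congr 1; omega
  have e2 : (∑ k ∈ Finset.Ioc (-1:ℤ) ((d:ℤ) - 1), F k)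
      = ∑ a ∈ Finset.range d, F (a:ℤ) := by
    refine Finset.sum_bij' (fun k _ => k.toNat) (fun a _ => (a:ℤ)) ?_ ?_ ?_ ?_ ?_
    · intro k hk; simp only [Finset.mem_Ioc] at hk; simp only [Finset.mem_range]; omega
    · intro a ha; simp only [Finset.mem_range] at ha; simp only [Finset.mem_Ioc]; omega
    · intro k hk; simp only [Finset.mem_Ioc] at hk; omega
    · intro a ha; simp only [Finset.mem_range] at ha; omega
    · intro k hk; simp only [Finset.mem_Ioc] at hk; congr 1; omega
  have e3 : (∑ k ∈ Finset.Ioc ((d:ℤ) - 1) ((Nn:ℤ) + d), F k)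
      = ∑ a ∈ Finset.range (Nn+1), F ((a:ℤ) + d) := by
    refine Finset.sum_bij' (fun k _ => (k - d).toNat) (fun a _ => (a:ℤ) + d) ?_ ?_ ?_ ?_ ?_
    · intro k hk; simp only [Finset.mem_Ioc] at hk; simp only [Finset.mem_range]; omega
    · intro a ha; simp only [Finset.mem_range] at ha; simp only [Finset.mem_Ioc]; omega
    · intro k hk; simp only [Finset.mem_Ioc] at hk; omega
    · intro a ha; simp only [Finset.mem_range] at ha; omega
    · intro k hk; simp only [Finset.mem_Ioc] at hk; congr 1; omega
  -- flip: F (-1 - a) = F (a + d)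
  have hflip : ∀ a : ℕ, F (-1 - (a:ℤ)) = F ((a:ℤ) + d) := by
    intro a
    simp only [hF, hT]
    have harg1 : (-1 - (a:ℤ)) - (d:ℤ) = -1 - (a:ℤ) - d := by ring
    have harg2 : (-1 : ℤ) - (-1 - (a:ℤ)) = (a:ℤ) := by ring
    have harg3 : ((a:ℤ) + d) - d = (a:ℤ) := by ring
    have harg4 : (-1 : ℤ) - ((a:ℤ) + d) = -1 - (a:ℤ) - d := by ring
    rw [harg1, harg2, harg3, harg4, hswap (-1 - (a:ℤ) - d) (a:ℤ), ← mul_assoc]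
    congr 1
    rw [← zpow_natCast (-1:ℚ) (d+1), ← zpow_add₀ (by norm_num : (-1:ℚ) ≠ 0)]
    apply aux_neg_one_zpow
    exact ⟨-(a:ℤ), by push_cast; ring⟩
  -- contraction with the inverse matrix
  have hcontract : ∀ (t : ℤ) (x : ι'), (∑ y, Gi x y * ∑ z, A t z * G z y) = A t x := by
    intro t x
    have h1 : ∀ y, Gi x y * (∑ z, A t z * G z y) = ∑ z, A t z * (Gi x y * G z y) := by
      intro y
      rw [Finset.mul_sum]
      exact Finset.sum_congr rfl fun z _ => by ring
    rw [Finset.sum_congr rfl fun y _ => h1 y, Finset.sum_comm]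
    have h2 : ∀ z, (∑ y, A t z * (Gi x y * G z y)) = A t z * (if x = z then 1 else 0) := by
      intro z
      rw [← Finset.mul_sum, hGi]
    rw [Finset.sum_congr rfl fun z _ => h2 z]
    simp [mul_ite, Finset.sum_ite_eq]
  -- first term identification
  have hfirst : ∀ a : ℕ, F ((a:ℤ) + d)
      = -(∑ x, lam x * A (a:ℤ) x *
          ((-1:ℚ)^(a + d + 1) * ∑ z, A (-1 - ((a + d : ℕ) : ℤ)) z * G z x)) := by
    intro a
    simp only [hF, hT]
    have harg3 : ((a:ℤ) + d) - d = (a:ℤ) := by ring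
    have harg4 : (-1:ℤ) - ((a:ℤ) + d) = -1 - ((a + d : ℕ) : ℤ) := by push_cast; ring
    rw [harg3, harg4, Finset.mul_sum, ← Finset.sum_neg_distrib]
    refine Finset.sum_congr rfl fun x _ => ?_
    have hinner : (∑ y, lam x * A (a:ℤ) x * A (-1 - ((a + d : ℕ) : ℤ)) y * G x y)
        = lam x * A (a:ℤ) x * ∑ z, A (-1 - ((a + d : ℕ) : ℤ)) z * G z x := by
      rw [Finset.mul_sum]
      exact Finset.sum_congr rfl fun y _ => by rw [hGs x y]; ring
    rw [hinner, show ((a:ℤ) + d) = ((a + d : ℕ) : ℤ) from by push_cast; ring, zpow_natCast,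
      pow_succ]
    ring
  -- middle term identification
  have hmid : ∀ a ∈ Finset.range d, F (a:ℤ)
      = ∑ x, ∑ y, (-1:ℚ)^(d - 1 - a) * lam x * Gi x y *
          ((-1:ℚ)^(a + 1) * ∑ z, A (-1 - (a : ℤ)) z * G z x) *
          ((-1:ℚ)^(d - 1 - a + 1) * ∑ z, A (-1 - ((d - 1 - a : ℕ) : ℤ)) z * G z y) := by
    intro a ha
    simp only [Finset.mem_range] at ha
    simp only [hF, hT]
    have ha' : (a:ℤ) - d = -1 - ((d - 1 - a : ℕ) : ℤ) := by omega
    rw [ha', zpow_natCast, Finset.mul_sum]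
    refine Finset.sum_congr rfl fun x _ => ?_
    -- RHS inner sum
    have hsgn : (-1:ℚ)^(d - 1 - a) * (-1:ℚ)^(a + 1) * (-1:ℚ)^(d - 1 - a + 1) = (-1:ℚ)^a := by
      rw [← pow_add, ← pow_add,
        show (d - 1 - a) + (a + 1) + (d - 1 - a + 1) = 2*((d - 1 - a) + 1) + a from by ring,
        pow_add, pow_mul]
      norm_num
    have hstep : ∀ y, (-1:ℚ)^(d - 1 - a) * lam x * Gi x y *
          ((-1:ℚ)^(a + 1) * ∑ z, A (-1 - (a : ℤ)) z * G z x) *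
          ((-1:ℚ)^(d - 1 - a + 1) * ∑ z, A (-1 - ((d - 1 - a : ℕ) : ℤ)) z * G z y)
        = ((-1:ℚ)^(d - 1 - a) * (-1:ℚ)^(a + 1) * (-1:ℚ)^(d - 1 - a + 1) * lam x *
            (∑ z, A (-1 - (a : ℤ)) z * G z x)) *
          (Gi x y * ∑ z, A (-1 - ((d - 1 - a : ℕ) : ℤ)) z * G z y) := by
      intro y; ring
    rw [Finset.sum_congr rfl fun y _ => hstep y, ← Finset.mul_sum,
      hcontract (-1 - ((d - 1 - a : ℕ) : ℤ)) x]
    have hinner : (∑ y, lam x * A (-1 - ((d - 1 - a : ℕ) : ℤ)) x * A (-1 - (a:ℤ)) y * G x y)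
        = lam x * A (-1 - ((d - 1 - a : ℕ) : ℤ)) x * ∑ z, A (-1 - (a:ℤ)) z * G z x := by
      rw [Finset.mul_sum]
      exact Finset.sum_congr rfl fun y _ => by rw [hGs x y]; ring
    rw [hinner]
    linear_combination (-(lam x * (∑ z, A (-1 - (a:ℤ)) z * G z x) *
      A (-1 - ((d - 1 - a : ℕ) : ℤ)) x)) * hsgn
  -- convert goal finsums
  have hL : (∑ᶠ k : ℤ, (-1:ℚ)^k * ∑ x, ∑ y, lam x * A (k - d) x * A (-1 - k) y * G x y)
      = ∑ᶠ k : ℤ, F k := finsum_congr fun k => by simp only [hF, hT]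
  have hg1supp : Function.support (fun a : ℕ => ∑ x, lam x * A (a:ℤ) x *
      ((-1:ℚ)^(a + d + 1) * ∑ z, A (-1 - ((a + d : ℕ) : ℤ)) z * G z x))
      ⊆ ((Finset.range (Nn+1) : Finset ℕ) : Set ℕ) := by
    intro a ha
    simp only [Function.mem_support] at ha
    simp only [Finset.coe_range, Set.mem_Iio]
    by_contra h
    push_neg at h
    have h0 : A (a:ℤ) = 0 := hA _ (by omega)
    exact ha (by simp [h0])
  have hR1 : (∑ᶠ a : ℕ, ∑ x, lam x * A (a:ℤ) x *
      ((-1:ℚ)^(a + d + 1) * ∑ z, A (-1 - ((a + d : ℕ) : ℤ)) z * G z x))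
      = ∑ a ∈ Finset.range (Nn+1), ∑ x, lam x * A (a:ℤ) x *
      ((-1:ℚ)^(a + d + 1) * ∑ z, A (-1 - ((a + d : ℕ) : ℤ)) z * G z x) :=
    finsum_eq_sum_of_support_subset _ hg1supp
  -- assemble
  rw [hL, hfin, hsplit, e1, e2, e3, hR1,
    Finset.sum_congr rfl fun a _ => hflip a,
    Finset.sum_congr rfl hmid]
  have hS3 : (∑ a ∈ Finset.range (Nn+1), F ((a:ℤ) + d))
      = -(∑ a ∈ Finset.range (Nn+1), ∑ x, lam x * A (a:ℤ) x *
          ((-1:ℚ)^(a + d + 1) * ∑ z, A (-1 - ((a + d : ℕ) : ℤ)) z * G z x)) := by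
    rw [← Finset.sum_neg_distrib]
    exact Finset.sum_congr rfl fun a _ => hfirst a
  rw [hS3]
  ring

-- spinPairing on std basis vectors
lemma spinPairing_basis (r : ℕ) (m n : Fin (r-1)) :
    spinPairing r (Pi.basisFun ℚ (Fin (r-1)) m) (Pi.basisFun ℚ (Fin (r-1)) n)
      = if (m : ℕ) + 1 + ((n : ℕ) + 1) = r then (1 : ℚ) else 0 := by
  rw [spinPairing]
  rw [Matrix.toLinearMap₂'_apply]
  simp only [Pi.basisFun_apply, Matrix.of_apply, smul_eq_mul]
  rw [Finset.sum_eq_single m, Finset.sum_eq_single n]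
  · simp [Pi.single_apply]
  · intro b _ hb; simp [Pi.single_apply, hb]
  · simp
  · intro b _ hb
    rw [Finset.sum_eq_single n]
    · simp [Pi.single_apply, hb]
    · intro c _ hc; simp [Pi.single_apply, hc]
    · simp
  · simp

-- the matrix S
def auxS (r : ℕ) : Matrix (Fin (r-1)) (Fin (r-1)) ℚ :=
  Matrix.of fun i j => if (i : ℕ) + 1 + ((j : ℕ) + 1) = r then (1 : ℚ) else 0

lemma auxS_mul_self (r : ℕ) (hr : 2 ≤ r) : auxS r * auxS r = 1 := by
  ext i k
  rw [Matrix.mul_apply, Matrix.one_apply]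
  have hkey : ∀ j : Fin (r-1), auxS r i j * auxS r j k
      = if j = (⟨r - 2 - (i:ℕ), by omega⟩ : Fin (r-1)) then (if i = k then (1:ℚ) else 0) else 0 := by
    intro j
    simp only [auxS, Matrix.of_apply, Fin.ext_iff]
    have hi := i.isLt
    have hj := j.isLt
    have hk := k.isLt
    split_ifs <;> simp_all <;> omega
  rw [Finset.sum_congr rfl fun j _ => hkey j, Finset.sum_ite_eq']
  simp

-- bernoulliDiag on std basis vectors
lemma bernoulliDiag_basis (r d : ℕ) (m : Fin (r-1)) :
    bernoulliDiag r d (Pi.basisFun ℚ (Fin (r-1)) m)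
      = ((Polynomial.bernoulli (d + 1)).eval ((((m : ℕ) : ℚ) + 1) / r)) •
          Pi.basisFun ℚ (Fin (r-1)) m := by
  funext i
  simp only [bernoulliDiag, LinearMap.pi_apply, LinearMap.smul_apply, LinearMap.proj_apply,
    Pi.basisFun_apply, Pi.smul_apply, smul_eq_mul, Pi.single_apply]
  split_ifs with h
  · subst h; ring
  · ring


/-- The Hamiltonian of the r-spin Givental field:
`(1/2) ω(Tf, f)` equals the quadratic expression
`− Σ_{a,μ,m} (B_{d+1}(m/r)/(d+1)!) q_a^{μ⊗m} p_{a+d,μ⊗m}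
 + (1/2) Σ_{a+a'=d−1} (−1)^{a'} (B_{d+1}(m/r)/(d+1)!) g^{μ⊗m,μ'⊗m'} p_{a,μ⊗m} p_{a',μ'⊗m'}`
in the Darboux coordinates of `f`. -/
theorem rspinField_hamiltonian {H : Type*} [AddCommGroup H] [Module ℚ H]
    [FiniteDimensional ℚ H] {ι : Type*} [Fintype ι] [DecidableEq ι]
    (g : H →ₗ[ℚ] H →ₗ[ℚ] ℚ)
    (hsymm : ∀ u v : H, g u v = g v u)
    (hnondeg : ∀ u : H, (∀ v : H, g u v = 0) → u = 0)
    (b : Module.Basis ι ℚ H)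
    (r d : ℕ) (hr : 2 ≤ r) (hd : 1 ≤ d)
    (f : ℤ → H ⊗[ℚ] (Fin (r - 1) → ℚ)) (hf : IsGivental f) :
    letI gV : (H ⊗[ℚ] (Fin (r - 1) → ℚ)) →ₗ[ℚ] (H ⊗[ℚ] (Fin (r - 1) → ℚ)) →ₗ[ℚ] ℚ :=
      LinearMap.BilinForm.tmul g (spinPairing r)
    letI bV : Module.Basis (ι × Fin (r - 1)) ℚ (H ⊗[ℚ] (Fin (r - 1) → ℚ)) :=
      Module.Basis.tensorProduct b (Pi.basisFun ℚ (Fin (r - 1)))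
    letI G : Matrix (ι × Fin (r - 1)) (ι × Fin (r - 1)) ℚ :=
      Matrix.of fun x y => gV (bV x) (bV y)
    letI c : Fin (r - 1) → ℚ := fun m =>
      (Polynomial.bernoulli (d + 1)).eval ((((m : ℕ) : ℚ) + 1) / r) /
        (Nat.factorial (d + 1) : ℚ)
    (1 / 2 : ℚ) * giventalForm gV (rspinField r d f) f =
      -(∑ᶠ a : ℕ, ∑ x : ι × Fin (r - 1),
          c x.2 * qCoord bV f a x * pCoord gV bV f (a + d) x) +
      (1 / 2 : ℚ) * ∑ a ∈ Finset.range d, ∑ x : ι × Fin (r - 1), ∑ y : ι × Fin (r - 1),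
          (-1 : ℚ) ^ (d - 1 - a) * c x.2 * (G⁻¹ x y) *
            pCoord gV bV f a x * pCoord gV bV f (d - 1 - a) y := by
  classical
  set gV : (H ⊗[ℚ] (Fin (r - 1) → ℚ)) →ₗ[ℚ] (H ⊗[ℚ] (Fin (r - 1) → ℚ)) →ₗ[ℚ] ℚ :=
    LinearMap.BilinForm.tmul g (spinPairing r) with hgV
  set bV : Module.Basis (ι × Fin (r - 1)) ℚ (H ⊗[ℚ] (Fin (r - 1) → ℚ)) :=
    Module.Basis.tensorProduct b (Pi.basisFun ℚ (Fin (r - 1))) with hbV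
  set G : Matrix (ι × Fin (r - 1)) (ι × Fin (r - 1)) ℚ :=
    Matrix.of fun x y => gV (bV x) (bV y) with hG
  set c : Fin (r - 1) → ℚ := fun m =>
    (Polynomial.bernoulli (d + 1)).eval ((((m : ℕ) : ℚ) + 1) / r) /
      (Nat.factorial (d + 1) : ℚ) with hc
  obtain ⟨N0, hN0⟩ := hf
  set Nn : ℕ := N0.toNat with hNn
  have hfN : ∀ k : ℤ, (Nn:ℤ) < k → f k = 0 := fun k hk => hN0 k (by omega)
  set A : ℤ → (ι × Fin (r-1)) → ℚ := fun k x => bV.repr (f k) x with hA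
  have hAzero : ∀ k : ℤ, (Nn:ℤ) < k → A k = 0 := by
    intro k hk; funext x; rw [hA]; simp [hfN k hk]
  have hGdef : ∀ x y : ι × Fin (r-1), G x y
      = g (b x.1) (b y.1) * (if (x.2:ℕ)+1+((y.2:ℕ)+1) = r then (1:ℚ) else 0) := by
    intro x y
    rw [hG]
    show gV (bV x) (bV y) = _
    rw [hbV, Module.Basis.tensorProduct_apply', Module.Basis.tensorProduct_apply', hgV]
    rw [LinearMap.BilinForm.tensorDistrib_tmul]
    rw [spinPairing_basis, smul_eq_mul, mul_comm]
  have hGs : ∀ x y : ι × Fin (r-1), G x y = G y x := by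
    intro x y
    rw [hGdef x y, hGdef y x, hsymm (b x.1) (b y.1),
      show (x.2:ℕ)+1+((y.2:ℕ)+1) = ((y.2:ℕ)+1+((x.2:ℕ)+1)) from by ring]
  -- repr of the image under the tensor operator
  have hreprW : ∀ (u : H ⊗[ℚ] (Fin (r - 1) → ℚ)) (x : ι × Fin (r-1)),
      bV.repr ((TensorProduct.map LinearMap.id (bernoulliDiag r d)) u) x
        = (Polynomial.bernoulli (d+1)).eval ((((x.2:ℕ):ℚ)+1)/r) * bV.repr u x := by
    intro u x
    have hstep : (TensorProduct.map LinearMap.id (bernoulliDiag r d)) (∑ y, bV.repr u y • bV y)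
        = ∑ y, ((Polynomial.bernoulli (d+1)).eval ((((y.2:ℕ):ℚ)+1)/r) * bV.repr u y) • bV y := by
      rw [map_sum]
      refine Finset.sum_congr rfl fun y _ => ?_
      rw [map_smul, hbV, Module.Basis.tensorProduct_apply', TensorProduct.map_tmul,
        bernoulliDiag_basis, LinearMap.id_coe, id_eq, TensorProduct.tmul_smul, smul_smul,
        ← Module.Basis.tensorProduct_apply', mul_comm]
    conv_lhs => rw [← bV.sum_repr u]
    rw [hstep]
    exact congrFun (bV.repr_sum_self fun y =>
      (Polynomial.bernoulli (d+1)).eval ((((y.2:ℕ):ℚ)+1)/r) * bV.repr u y) x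
  -- bilinear form in coordinates
  have hexp : ∀ u v : H ⊗[ℚ] (Fin (r - 1) → ℚ),
      gV u v = ∑ x, ∑ y, bV.repr u x * bV.repr v y * G x y := by
    intro u v
    conv_lhs => rw [← bV.sum_repr u, ← bV.sum_repr v]
    simp only [map_sum, map_smul, LinearMap.coe_sum, Finset.sum_apply, LinearMap.smul_apply,
      smul_eq_mul]
    rw [Finset.sum_comm]
    refine Finset.sum_congr rfl fun x _ => ?_
    rw [Finset.mul_sum]
    refine Finset.sum_congr rfl fun y _ => ?_
    rw [hG]
    simp only [Matrix.of_apply]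
    ring
  have hexpR : ∀ (u : H ⊗[ℚ] (Fin (r - 1) → ℚ)) (x : ι × Fin (r-1)),
      gV u (bV x) = ∑ z, bV.repr u z * G z x := by
    intro u x
    rw [hexp u (bV x)]
    refine Finset.sum_congr rfl fun z _ => ?_
    rw [Finset.sum_eq_single x]
    · simp
    · intro y _ hy
      simp [Module.Basis.repr_self, Finsupp.single_apply, Ne.symm hy]
    · simp
  -- the coefficient form of the LHS integrand
  have hcoeff : ∀ k l : ℤ, gV (rspinField r d f k) (f l)
      = ∑ x, ∑ y, c x.2 * A (k - d) x * A l y * G x y := by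
    intro k l
    have hru : rspinField r d f k = ((Nat.factorial (d+1) : ℚ))⁻¹ •
        (TensorProduct.map LinearMap.id (bernoulliDiag r d)) (f (k - d)) := rfl
    rw [hru, map_smul, LinearMap.smul_apply, smul_eq_mul, hexp, Finset.mul_sum]
    refine Finset.sum_congr rfl fun x _ => ?_
    rw [Finset.mul_sum]
    refine Finset.sum_congr rfl fun y _ => ?_
    rw [hreprW, hc, hA]
    simp only []
    rw [div_eq_mul_inv]
    ring
  -- Darboux coordinates
  have hq : ∀ (a : ℕ) (x : ι × Fin (r-1)), qCoord bV f a x = A (a:ℤ) x := by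
    intro a x; rw [qCoord, hA]
  have hp : ∀ (a : ℕ) (x : ι × Fin (r-1)),
      pCoord gV bV f a x = (-1:ℚ)^(a+1) * ∑ z, A (-1 - (a:ℤ)) z * G z x := by
    intro a x
    rw [pCoord, hexpR]
  -- the sign property of the Bernoulli coefficients
  have hlamG : ∀ x y : ι × Fin (r-1), c x.2 * G x y = (-1:ℚ)^(d+1) * (c y.2 * G x y) := by
    intro x y
    rw [hGdef x y]
    by_cases h : (x.2:ℕ)+1+((y.2:ℕ)+1) = r
    · rw [if_pos h]
      have hr0 : (r:ℚ) ≠ 0 := Nat.cast_ne_zero.mpr (by omega)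
      have hcast : (((x.2:ℕ):ℚ)+1) / r = 1 - ((((y.2:ℕ):ℚ)+1) / r) := by
        have hcq : ((x.2:ℕ):ℚ) + 1 + (((y.2:ℕ):ℚ) + 1) = r := by exact_mod_cast congrArg (Nat.cast : ℕ → ℚ) h
        field_simp
        linarith
      have hcc : c x.2 = (-1:ℚ)^(d+1) * c y.2 := by
        rw [hc]
        simp only []
        rw [hcast, aux_bernoulli_eval_one_sub]
        ring
      rw [hcc]; ring
    · rw [if_neg h]; ring
  -- invertibility of G
  have hmatg : LinearMap.BilinForm.toMatrix b g = Matrix.of fun i j : ι => g (b i) (b j) := by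
    ext i j; rw [BilinForm.toMatrix_apply]; rfl
  have hdetg : (Matrix.of fun i j : ι => g (b i) (b j)).det ≠ 0 := by
    have hnd : LinearMap.BilinForm.Nondegenerate g :=
      ⟨fun u hu => hnondeg u hu, fun v hv => hnondeg v fun w => by rw [hsymm]; exact hv w⟩
    have h2 := (LinearMap.BilinForm.nondegenerate_iff_det_ne_zero (B := g) b).mp hnd
    rwa [hmatg] at h2
  have hdetS : (auxS r).det ≠ 0 := by
    intro h0
    have h1 := congrArg Matrix.det (auxS_mul_self r hr)
    rw [Matrix.det_mul, h0, mul_zero, Matrix.det_one] at h1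
    norm_num at h1
  have hGkron : G = Matrix.kroneckerMap (· * ·) (Matrix.of fun i j : ι => g (b i) (b j)) (auxS r) := by
    ext x y
    rw [hGdef]
    simp [Matrix.kroneckerMap_apply, auxS]
  have hdetG : IsUnit G.det := by
    rw [hGkron, Matrix.det_kronecker]
    exact (mul_ne_zero (pow_ne_zero _ hdetg) (pow_ne_zero _ hdetS)).isUnit
  have hGi : ∀ x z : ι × Fin (r-1), (∑ y, G⁻¹ x y * G z y) = if x = z then (1:ℚ) else 0 := by
    intro x z
    have h1 : (G⁻¹ * G) x z = if x = z then 1 else 0 := by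
      rw [Matrix.nonsing_inv_mul G hdetG, Matrix.one_apply]
    rw [← h1, Matrix.mul_apply]
    exact Finset.sum_congr rfl fun y _ => by rw [hGs z y]
  -- rewrite goal into the core form
  have hLHS : giventalForm gV (rspinField r d f) f
      = ∑ᶠ k : ℤ, (-1:ℚ)^k * ∑ x, ∑ y, c x.2 * A (k - d) x * A (-1 - k) y * G x y := by
    rw [giventalForm]
    exact finsum_congr fun k => by rw [hcoeff]
  have hRHS1 : (∑ᶠ a : ℕ, ∑ x : ι × Fin (r-1), c x.2 * qCoord bV f a x * pCoord gV bV f (a+d) x)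
      = ∑ᶠ a : ℕ, ∑ x, c x.2 * A (a:ℤ) x * ((-1:ℚ)^(a+d+1) * ∑ z, A (-1 - ((a+d:ℕ):ℤ)) z * G z x) :=
    finsum_congr fun a => Finset.sum_congr rfl fun x _ => by rw [hq, hp]
  have hRHS2 : (∑ a ∈ Finset.range d, ∑ x : ι × Fin (r-1), ∑ y : ι × Fin (r-1),
        (-1:ℚ)^(d-1-a) * c x.2 * (G⁻¹ x y) * pCoord gV bV f a x * pCoord gV bV f (d-1-a) y)
      = ∑ a ∈ Finset.range d, ∑ x, ∑ y,
        (-1:ℚ)^(d-1-a) * c x.2 * (G⁻¹ x y) *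
          ((-1:ℚ)^(a+1) * ∑ z, A (-1 - (a:ℤ)) z * G z x) *
          ((-1:ℚ)^(d-1-a+1) * ∑ z, A (-1 - ((d-1-a:ℕ):ℤ)) z * G z y) :=
    Finset.sum_congr rfl fun a _ => Finset.sum_congr rfl fun x _ =>
      Finset.sum_congr rfl fun y _ => by rw [hp, hp]
  rw [hLHS, hRHS1, hRHS2]
  exact aux_core A G G⁻¹ (fun x => c x.2) d Nn hd hAzero hGs hlamG hGi
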